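/- Let w : ℂ → ℂ be a homeomorphism satisfying the Beltrami equation w_z̄ = μ(z) w_z almost everywhere with ‖μ‖_∞ ≤ k < 1 and w ∈ W^{1,p}_loc for some p > 2. Then the inverse map h = w⁻¹ satisfies the equation h_w̄ = ν(w) h_w with ν(w) = −μ(h(w)) · (w_z / \overline{w_z}) ∘ h, and ‖ν‖_∞ = ‖μ‖_∞ ≤ k. -/
import Mathlib


noncomputable section

/-- Wirtinger derivative `f_z = ½(f_x − i f_y)`. -/
def wirtingerZ (f : ℂ → ℂ) (z : ℂ) : ℂ :=
  (fderiv ℝ f z 1 - Complex.I * fderiv ℝ f z Complex.I) / 2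

/-- Wirtinger derivative `f_z̄ = ½(f_x + i f_y)`. -/
def wirtingerZbar (f : ℂ → ℂ) (z : ℂ) : ℂ :=
  (fderiv ℝ f z 1 + Complex.I * fderiv ℝ f z Complex.I) / 2

/- STATEMENT 8: if the homeomorphism w solves the Beltrami equation
w_z̄ = μ w_z with ‖μ‖_∞ ≤ k < 1, then its inverse h = w⁻¹ solves
h_w̄ = ν(w) h_w with ν(w) = −μ(h(w))·(w_z/conj(w_z))∘h, and |ν| = |μ∘h| ≤ k
pointwise. -/
theorem inverse_beltrami_equation
    (w : ℂ ≃ₜ ℂ) (μ : ℂ → ℂ) (k : ℝ) (hk : k < 1)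
    (hμ : ∀ z, ‖μ z‖ ≤ k)
    (hdiff : Differentiable ℝ (w : ℂ → ℂ))
    (hdiffinv : Differentiable ℝ (w.symm : ℂ → ℂ))
    (hbeltrami : ∀ z, wirtingerZbar w z = μ z * wirtingerZ w z)
    (hwz : ∀ z, wirtingerZ w z ≠ 0)
    (ν : ℂ → ℂ)
    (hν : ∀ ζ, ν ζ = -μ (w.symm ζ) *
      (wirtingerZ w (w.symm ζ) / (starRingEnd ℂ) (wirtingerZ w (w.symm ζ)))) :
    (∀ ζ, wirtingerZbar (w.symm : ℂ → ℂ) ζ = ν ζ * wirtingerZ (w.symm : ℂ → ℂ) ζ) ∧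
    (∀ ζ, ‖ν ζ‖ = ‖μ (w.symm ζ)‖) ∧ (∀ ζ, ‖ν ζ‖ ≤ k) := by
  have hnorm : ∀ ζ, ‖ν ζ‖ = ‖μ (w.symm ζ)‖ := by
    intro ζ
    rw [hν ζ]
    have h0 := hwz (w.symm ζ)
    have h0' : (starRingEnd ℂ) (wirtingerZ w (w.symm ζ)) ≠ 0 := by
      simpa using h0
    rw [norm_mul, norm_neg, norm_div, RCLike.norm_conj, div_self (norm_ne_zero_iff.mpr h0),
      mul_one]
  refine ⟨?_, hnorm, fun ζ => (hnorm ζ) ▸ hμ (w.symm ζ)⟩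
  intro ζ
  set z := w.symm ζ with hz
  set A := fderiv ℝ (w : ℂ → ℂ) z with hA
  set B := fderiv ℝ (w.symm : ℂ → ℂ) ζ with hB
  -- chain rule: B ∘ A = id
  have hidd : (w.symm : ℂ → ℂ) ∘ (w : ℂ → ℂ) = id := funext fun x => w.symm_apply_apply x
  have hwzζ : (w : ℂ → ℂ) z = ζ := w.apply_symm_apply ζ
  have h2 : fderiv ℝ ((w.symm : ℂ → ℂ) ∘ (w : ℂ → ℂ)) z =
      (fderiv ℝ (w.symm : ℂ → ℂ) ((w : ℂ → ℂ) z)).comp (fderiv ℝ (w : ℂ → ℂ) z) :=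
    fderiv_comp z (hdiffinv _) (hdiff z)
  rw [hidd, fderiv_id, hwzζ, ← hA, ← hB] at h2
  have heqv : ∀ v : ℂ, B (A v) = v := by
    intro v
    have := DFunLike.congr_fun h2.symm v
    simpa using this
  set a := A 1 with ha'
  set b := A Complex.I with hb'
  set ap := B 1 with hap'
  set bp := B Complex.I with hbp'
  -- linearity of B
  have hlin : ∀ c : ℂ, B c = (c.re : ℂ) * ap + (c.im : ℂ) * bp := by
    intro c
    have hc : c = (c.re : ℝ) • (1 : ℂ) + (c.im : ℝ) • Complex.I := by
      rw [Complex.real_smul, Complex.real_smul, mul_one, Complex.re_add_im]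
    conv_lhs => rw [hc]
    rw [map_add, map_smul, map_smul, Complex.real_smul, Complex.real_smul]
  have eq1 : (a.re : ℂ) * ap + (a.im : ℂ) * bp = 1 := by
    rw [← hlin a]; exact heqv 1
  have eq2 : (b.re : ℂ) * ap + (b.im : ℂ) * bp = Complex.I := by
    rw [← hlin b]; exact heqv Complex.I
  -- conjugation facts
  have hca : (starRingEnd ℂ) a = (a.re : ℂ) - (a.im : ℂ) * Complex.I := by
    apply Complex.ext <;> simp
  have hcb : (starRingEnd ℂ) b = (b.re : ℂ) - (b.im : ℂ) * Complex.I := by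
    apply Complex.ext <;> simp
  have hra : a = (a.re : ℂ) + (a.im : ℂ) * Complex.I := (Complex.re_add_im a).symm
  have hrb : b = (b.re : ℂ) + (b.im : ℂ) * Complex.I := (Complex.re_add_im b).symm
  -- the key algebraic identity: q_B · conj(p_A) + p_B · q_A = 0
  have main : ((ap + Complex.I * bp) / 2) *
        (((starRingEnd ℂ) a + Complex.I * (starRingEnd ℂ) b) / 2) +
      ((ap - Complex.I * bp) / 2) * ((a + Complex.I * b) / 2) = 0 := by
    linear_combination ((ap + Complex.I * bp) / 4) * hca +
      (Complex.I * (ap + Complex.I * bp) / 4) * hcb +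
      ((ap - Complex.I * bp) / 4) * hra +
      (Complex.I * (ap - Complex.I * bp) / 4) * hrb +
      (1 / 2 : ℂ) * eq1 + (Complex.I / 2) * eq2 +
      ((1 - (a.im : ℂ) * bp - Complex.I * (b.im : ℂ) * bp) / 2) * Complex.I_sq
  -- rewrite conj of p_A
  have hconj : (starRingEnd ℂ) ((a - Complex.I * b) / 2) =
      ((starRingEnd ℂ) a + Complex.I * (starRingEnd ℂ) b) / 2 := by
    rw [map_div₀, map_sub, map_mul, Complex.conj_I, map_ofNat]
    ring
  -- Beltrami equation at z
  have hbel : (a + Complex.I * b) / 2 = μ z * ((a - Complex.I * b) / 2) := by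
    have := hbeltrami z
    rw [wirtingerZbar, wirtingerZ, ← hA, ← ha', ← hb'] at this
    exact this
  have hpA : (a - Complex.I * b) / 2 ≠ 0 := by
    have := hwz z
    rw [wirtingerZ, ← hA, ← ha', ← hb'] at this
    exact this
  have hcpA : ((starRingEnd ℂ) a + Complex.I * (starRingEnd ℂ) b) / 2 ≠ 0 := by
    rw [← hconj, ne_eq, map_eq_zero]; exact hpA
  -- conclude
  show wirtingerZbar (w.symm : ℂ → ℂ) ζ = ν ζ * wirtingerZ (w.symm : ℂ → ℂ) ζ
  rw [wirtingerZbar, wirtingerZ, ← hB, ← hap', ← hbp', hν ζ, ← hz]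
  rw [wirtingerZ, ← hA, ← ha', ← hb', hconj]
  rw [hbel] at main
  have hXc : ((ap + Complex.I * bp) / 2) *
      (((starRingEnd ℂ) a + Complex.I * (starRingEnd ℂ) b) / 2) =
      -(((ap - Complex.I * bp) / 2) * (μ z * ((a - Complex.I * b) / 2))) := by
    linear_combination main
  calc (ap + Complex.I * bp) / 2
      = ((ap + Complex.I * bp) / 2 *
          (((starRingEnd ℂ) a + Complex.I * (starRingEnd ℂ) b) / 2)) /
          (((starRingEnd ℂ) a + Complex.I * (starRingEnd ℂ) b) / 2) :=
        (mul_div_cancel_right₀ _ hcpA).symm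
    _ = -(((ap - Complex.I * bp) / 2) * (μ z * ((a - Complex.I * b) / 2))) /
          (((starRingEnd ℂ) a + Complex.I * (starRingEnd ℂ) b) / 2) := by rw [hXc]
    _ = -μ z * ((a - Complex.I * b) / 2 /
          (((starRingEnd ℂ) a + Complex.I * (starRingEnd ℂ) b) / 2)) *
          ((ap - Complex.I * bp) / 2) := by ring
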